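/- Let p be a prime. The formal power series X/log(1+X) ∈ ℚ_p[[X]] (the multiplicative inverse of log(1+X)/X = ∑_{k≥0} (-1)^k X^k/(k+1)) has coefficients b_k satisfying v_p(b_k) ≥ -k/(p-1) for all k ≥ 0, i.e. (p-1)*v_p(b_k) + k ≥ 0. -/

import Mathlib

open PowerSeries IsUltrametricDist Finset

private lemma key_val (p : ℕ) [Fact p.Prime] (i : ℕ) :
    (p - 1) * padicValNat p (i+1) ≤ i := by
  have hp := (Fact.out : p.Prime).two_le
  set v := padicValNat p (i+1) with hv
  have h1 : p ^ v ≤ i + 1 := Nat.le_of_dvd i.succ_pos pow_padicValNat_dvd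
  have h2 : (p - 1) * v + 1 ≤ p ^ v := by
    obtain ⟨q, rfl⟩ : ∃ q, p = q + 2 := ⟨p - 2, by omega⟩
    induction v with
    | zero => simp
    | succ n ih =>
      have h3 : 1 ≤ (q+2) ^ n := Nat.one_le_pow _ _ (by omega)
      have : (q+2) ^ (n+1) = (q+2) * (q+2)^n := by ring
      simp only [show q + 2 - 1 = q + 1 from rfl] at *
      nlinarith
  omega



/-- The power series `log(1+X)/X = ∑_{k≥0} (-1)^k X^k/(k+1)` over `ℚ_[p]`. -/
noncomputable def logOneAddDivX (p : ℕ) [Fact p.Prime] : PowerSeries ℚ_[p] :=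
  PowerSeries.mk fun k => (-1 : ℚ_[p]) ^ k / ((k : ℚ_[p]) + 1)

/-- the inverse power series `X/log(1+X)` exists and its coefficients `b_k`
satisfy `(p-1)·v_p(b_k) + k ≥ 0`, i.e. `v_p(b_k) ≥ -k/(p-1)`. -/
theorem stmt_5 (p : ℕ) [Fact p.Prime] :
    ∃ g : PowerSeries ℚ_[p], logOneAddDivX p * g = 1 ∧
      ∀ k : ℕ, 0 ≤ ((p : ℤ) - 1) * ((PowerSeries.coeff (R := ℚ_[p]) k) g).valuation + (k : ℤ) := by
  have hp2 := (Fact.out : p.Prime).two_le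
  have hp1 : (1:ℝ) < (p:ℝ) := by exact_mod_cast hp2.trans_lt' one_lt_two
  have hp0 : (0:ℝ) < (p:ℝ) := by linarith
  have hpm : (0:ℝ) < (p:ℝ) - 1 := by linarith
  set f := logOneAddDivX p with hf
  have hc : PowerSeries.constantCoeff (R := ℚ_[p]) f = ((1 : ℚ_[p]ˣ) : ℚ_[p]) := by
    simp [hf, logOneAddDivX, ← PowerSeries.coeff_zero_eq_constantCoeff_apply]
  refine ⟨f.invOfUnit 1, PowerSeries.mul_invOfUnit f 1 hc, ?_⟩
  set g := f.invOfUnit 1 with hg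
  -- norm bound on coefficients of f
  have hA : ∀ i : ℕ, ‖PowerSeries.coeff (R := ℚ_[p]) i f‖ ≤ (p:ℝ) ^ ((i:ℝ)/((p:ℝ)-1)) := by
    intro i
    have hne : ((i : ℚ_[p]) + 1) ≠ 0 := by
      simpa using (Nat.cast_ne_zero (R := ℚ_[p])).2 i.succ_ne_zero
    have hval : ((i : ℚ_[p]) + 1).valuation = padicValNat p (i+1) := by
      rw [show ((i : ℚ_[p]) + 1) = (((i+1 : ℕ)) : ℚ_[p]) by push_cast; ring,
        Padic.valuation_natCast]
    have hnorm : ‖PowerSeries.coeff (R := ℚ_[p]) i f‖ = (p:ℝ) ^ ((padicValNat p (i+1) : ℤ)) := by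
      rw [hf, logOneAddDivX, PowerSeries.coeff_mk, norm_div, norm_pow, norm_neg, norm_one,
        one_pow, one_div, Padic.norm_eq_zpow_neg_valuation hne, hval, ← zpow_neg, neg_neg]
    rw [hnorm, show ((p:ℝ) ^ ((padicValNat p (i+1) : ℤ)) : ℝ)
        = (p:ℝ) ^ (((padicValNat p (i+1) : ℤ) : ℝ)) from (Real.rpow_intCast _ _).symm,
      Real.rpow_le_rpow_left_iff hp1, le_div_iff₀ hpm]
    have := key_val p i
    have h2 : ((p:ℝ) - 1) * (padicValNat p (i+1) : ℝ) ≤ i := by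
      have hcast : (((p-1) * padicValNat p (i+1) : ℕ) : ℝ) ≤ (i : ℝ) := by exact_mod_cast this
      push_cast [Nat.cast_sub (by omega : 1 ≤ p)] at hcast
      linarith
    rw [Int.cast_natCast]
    linarith
  have hB : ∀ n : ℕ, ‖PowerSeries.coeff (R := ℚ_[p]) n g‖ ≤ (p:ℝ) ^ ((n:ℝ)/((p:ℝ)-1)) := by
    intro n
    induction n using Nat.strong_induction_on with
    | _ n ih =>
      rw [hg, PowerSeries.coeff_invOfUnit]
      rcases eq_or_ne n 0 with rfl | hn
      · simp
      · rw [if_neg hn]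
        rw [norm_mul, norm_neg]
        simp only [inv_one, Units.val_one, norm_one, one_mul]
        refine norm_sum_le_of_forall_le_of_nonneg (Real.rpow_nonneg hp0.le _) ?_
        rintro ⟨a, b⟩ hab
        rw [Finset.HasAntidiagonal.mem_antidiagonal] at hab
        dsimp only
        by_cases hb : b < n
        · rw [if_pos hb, norm_mul]
          calc ‖PowerSeries.coeff (R := ℚ_[p]) a f‖ * ‖PowerSeries.coeff (R := ℚ_[p]) b (f.invOfUnit 1)‖
              ≤ (p:ℝ) ^ ((a:ℝ)/((p:ℝ)-1)) * (p:ℝ) ^ ((b:ℝ)/((p:ℝ)-1)) :=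
                mul_le_mul (hA a) (ih b hb) (norm_nonneg _) (Real.rpow_nonneg hp0.le _)
            _ = (p:ℝ) ^ ((n:ℝ)/((p:ℝ)-1)) := by
                rw [← Real.rpow_add hp0, ← add_div, ← hab]; push_cast; ring_nf
        · rw [if_neg hb, norm_zero]
          exact Real.rpow_nonneg hp0.le _
  intro k
  by_cases h : PowerSeries.coeff (R := ℚ_[p]) k g = 0
  · rw [h, Padic.valuation_zero, mul_zero, zero_add]
    positivity
  · have hk := hB k
    rw [Padic.norm_eq_zpow_neg_valuation h,
      show ((p:ℝ) ^ (-(PowerSeries.coeff (R := ℚ_[p]) k g).valuation) : ℝ)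
        = (p:ℝ) ^ (((-(PowerSeries.coeff (R := ℚ_[p]) k g).valuation : ℤ) : ℝ))
        from (Real.rpow_intCast _ _).symm,
      Real.rpow_le_rpow_left_iff hp1, le_div_iff₀ hpm] at hk
    have : (0:ℝ) ≤ ((p:ℝ) - 1) * (((PowerSeries.coeff (R := ℚ_[p]) k g).valuation : ℤ) : ℝ) + k := by
      push_cast at hk ⊢
      nlinarith
    exact_mod_cast this
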